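/- Let A be an n×n real symmetric positive semidefinite matrix, B an n×n real symmetric positive definite matrix, let y ∈ ℝⁿ be nonzero with y_i = 0 for some index i, and define R̃(α) = R(y + α e_i), q₁₂ = A_{ii}(By)_i − B_{ii}(Ay)_i, q₁₃ = A_{ii}(yᵀBy) − B_{ii}(yᵀAy), and q₂₃ = (Ay)_i(yᵀBy) − (By)_i(yᵀAy). If q₁₂ = 0 and q₁₃ < 0, then α* = −q₂₃/q₁₃ is the unique global maximizer of R̃ over ℝ: R̃(α) < R̃(α*) for every α ≠ α*. -/

import Mathlib

open Matrix

lemma quad_expand {n : ℕ} (M : Matrix (Fin n) (Fin n) ℝ) (hM : M.IsSymm)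
    (y : Fin n → ℝ) (i : Fin n) (α : ℝ) :
    (y + α • (Pi.single i 1 : Fin n → ℝ)) ⬝ᵥ
        M.mulVec (y + α • (Pi.single i 1 : Fin n → ℝ)) =
      y ⬝ᵥ M.mulVec y + 2 * α * M.mulVec y i + α ^ 2 * M i i := by
  have h1 : y ⬝ᵥ M.mulVec (Pi.single i 1 : Fin n → ℝ) = M.mulVec y i := by
    rw [dotProduct_mulVec, ← hM.eq, vecMul_transpose, hM.eq]; simp
  have h2 : (Pi.single i 1 : Fin n → ℝ) ⬝ᵥ M.mulVec y = M.mulVec y i := by simp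
  have h3 : (Pi.single i 1 : Fin n → ℝ) ⬝ᵥ M.mulVec (Pi.single i 1 : Fin n → ℝ) = M i i := by
    simp [mulVec_single]
  rw [mulVec_add, mulVec_smul, dotProduct_add, add_dotProduct, add_dotProduct,
    dotProduct_smul, dotProduct_smul, smul_dotProduct, smul_dotProduct, h1, h2, h3]
  simp only [smul_eq_mul]
  ring

/-- If `q₁₂ = 0` and `q₁₃ < 0`, then `α* = −q₂₃/q₁₃` is the unique global maximizer
of `R̃(α) = R(y + α e_i)`. -/
theorem rayleigh_unique_max_of_q12_zero_q13_neg {n : ℕ} (A B : Matrix (Fin n) (Fin n) ℝ)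
    (hA : A.PosSemidef) (hB : B.PosDef) (y : Fin n → ℝ) (hy : y ≠ 0)
    (i : Fin n) (hyi : y i = 0)
    (hq12 : A i i * B.mulVec y i - B i i * A.mulVec y i = 0)
    (hq13 : A i i * (y ⬝ᵥ B.mulVec y) - B i i * (y ⬝ᵥ A.mulVec y) < 0) :
    ∀ α : ℝ,
      α ≠ -(A.mulVec y i * (y ⬝ᵥ B.mulVec y) - B.mulVec y i * (y ⬝ᵥ A.mulVec y)) /
            (A i i * (y ⬝ᵥ B.mulVec y) - B i i * (y ⬝ᵥ A.mulVec y)) →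
      ((y + α • (Pi.single i 1 : Fin n → ℝ)) ⬝ᵥ
          A.mulVec (y + α • (Pi.single i 1 : Fin n → ℝ))) /
        ((y + α • (Pi.single i 1 : Fin n → ℝ)) ⬝ᵥ
          B.mulVec (y + α • (Pi.single i 1 : Fin n → ℝ)))
      < (letI αs := -(A.mulVec y i * (y ⬝ᵥ B.mulVec y) - B.mulVec y i * (y ⬝ᵥ A.mulVec y)) /
            (A i i * (y ⬝ᵥ B.mulVec y) - B i i * (y ⬝ᵥ A.mulVec y))
        ((y + αs • (Pi.single i 1 : Fin n → ℝ)) ⬝ᵥ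
            A.mulVec (y + αs • (Pi.single i 1 : Fin n → ℝ))) /
          ((y + αs • (Pi.single i 1 : Fin n → ℝ)) ⬝ᵥ
            B.mulVec (y + αs • (Pi.single i 1 : Fin n → ℝ)))) := by
  intro α hα
  set a := A i i with ha
  set b := B i i with hb
  set p := A.mulVec y i with hp
  set q := B.mulVec y i with hq
  set c := y ⬝ᵥ A.mulVec y with hc
  set d := y ⬝ᵥ B.mulVec y with hd
  set β : ℝ := -(p * d - q * c) / (a * d - b * c) with hβ
  -- denominator positivity
  have hne : ∀ t : ℝ, (y + t • (Pi.single i 1 : Fin n → ℝ)) ≠ 0 := by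
    intro t h
    obtain ⟨j, hj⟩ := Function.ne_iff.mp hy
    have hji : j ≠ i := by rintro rfl; exact hj hyi
    have := congrFun h j
    simp [Pi.single_apply, hji, Pi.zero_apply] at this
    exact hj this
  have hDpos : ∀ t : ℝ, 0 < (y + t • (Pi.single i 1 : Fin n → ℝ)) ⬝ᵥ
      B.mulVec (y + t • (Pi.single i 1 : Fin n → ℝ)) := by
    intro t
    have := hB.dotProduct_mulVec_pos (hne t)
    simpa using this
  have hAq := quad_expand A hA.1 y i
  have hBq := quad_expand B hB.1 y i
  have hDα := hDpos α
  have hDβ := hDpos β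
  rw [hBq α] at hDα
  rw [hBq β] at hDβ
  have h13 : a * d - b * c ≠ 0 := ne_of_lt hq13
  have hβeq : (a * d - b * c) * β = -(p * d - q * c) := by
    rw [hβ]; field_simp
  have hαβ : α ≠ β := hα
  have hsq : 0 < (α - β) ^ 2 := by
    have := sub_ne_zero.mpr hαβ
    positivity
  have key : (c + 2 * α * p + α ^ 2 * a) * (d + 2 * β * q + β ^ 2 * b)
      - (c + 2 * β * p + β ^ 2 * a) * (d + 2 * α * q + α ^ 2 * b)
      = (a * d - b * c) * (α - β) ^ 2 + 2 * α * β * (α - β) * (a * q - b * p)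
        + 2 * (α - β) * ((a * d - b * c) * β + (p * d - q * c)) := by ring
  have hneg : (a * d - b * c) * (α - β) ^ 2 < 0 := mul_neg_of_neg_of_pos hq13 hsq
  have final : ((y + α • (Pi.single i 1 : Fin n → ℝ)) ⬝ᵥ
        A.mulVec (y + α • (Pi.single i 1 : Fin n → ℝ))) /
      ((y + α • (Pi.single i 1 : Fin n → ℝ)) ⬝ᵥ
        B.mulVec (y + α • (Pi.single i 1 : Fin n → ℝ)))
      < ((y + β • (Pi.single i 1 : Fin n → ℝ)) ⬝ᵥ
          A.mulVec (y + β • (Pi.single i 1 : Fin n → ℝ))) /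
        ((y + β • (Pi.single i 1 : Fin n → ℝ)) ⬝ᵥ
          B.mulVec (y + β • (Pi.single i 1 : Fin n → ℝ))) := by
    rw [hAq α, hAq β, hBq α, hBq β]
    rw [div_lt_div_iff₀ hDα hDβ]
    rw [← ha, ← hb, ← hp, ← hq, ← hc, ← hd]
    have h0 : (a * d - b * c) * β + (p * d - q * c) = 0 := by linarith [hβeq]
    have key2 : (c + 2 * α * p + α ^ 2 * a) * (d + 2 * β * q + β ^ 2 * b)
        - (c + 2 * β * p + β ^ 2 * a) * (d + 2 * α * q + α ^ 2 * b)
        = (a * d - b * c) * (α - β) ^ 2 := by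
      linear_combination key + (2 * α * β * (α - β)) * hq12 + (2 * (α - β)) * h0
    linarith [key2, hneg]
  exact final
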